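/- Let R be an m×m×m×m complex tensor that is involutive and satisfies the Yang–Baxter equation, when viewed as an operator on ℂ^m ⊗ ℂ^m. For n ≥ 1, let μ_n : (ℂ^m)^{⊗n} → ℂ_R⟨ψ⁺⟩ be the linear map sending e_{i₁} ⊗ ⋯ ⊗ e_{iₙ} to ψ⁺_{i₁} ⋯ ψ⁺_{iₙ}. Then the image of μ_n (the span of all degree-n products of the generators, i.e. the n-particle sector of the Fock space) is linearly isomorphic to the common eigenspace {Ψ ∈ (ℂ^m)^{⊗n} : R_{j,j+1} Ψ = Ψ for all j = 1, ..., n-1}; in particular, the rank of μ_n equals the dimension of this common eigenspace. -/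

import Mathlib

/-- The matrix of `R_{j,j+1}` on the tensor power `(ℂ^ι)^{⊗ n}` (basis indexed by
`Fin n → ι`), acting by `R` on factors `j, j+1` (0-indexed); `R a b c d = R^{ab}_{cd}`,
where `R (e_c ⊗ e_d) = Σ_{a,b} R^{ab}_{cd} e_a ⊗ e_b`. -/
def Rjj {ι : Type*} [DecidableEq ι] (R : ι → ι → ι → ι → ℂ) (n j : ℕ) (hj : j + 1 < n) :
    Matrix (Fin n → ι) (Fin n → ι) ℂ := fun I K =>
  (if ∀ t : Fin n, (t : ℕ) ≠ j → (t : ℕ) ≠ j + 1 → I t = K t then 1 else 0) *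
    R (I ⟨j, by omega⟩) (I ⟨j + 1, hj⟩) (K ⟨j, by omega⟩) (K ⟨j + 1, hj⟩)

/-- `R` is involutive: `R² = 1` as an operator on `ℂ^ι ⊗ ℂ^ι`. -/
def IsInvolutiveR {ι : Type*} [Fintype ι] [DecidableEq ι] (R : ι → ι → ι → ι → ℂ) : Prop :=
  Rjj R 2 0 (by omega) * Rjj R 2 0 (by omega) = 1

/-- `R` satisfies the Yang–Baxter equation `R₁₂ R₂₃ R₁₂ = R₂₃ R₁₂ R₂₃` on `(ℂ^ι)^{⊗3}`. -/
def SatisfiesYBE {ι : Type*} [Fintype ι] [DecidableEq ι] (R : ι → ι → ι → ι → ℂ) : Prop :=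
  Rjj R 3 0 (by omega) * Rjj R 3 1 (by omega) * Rjj R 3 0 (by omega) =
    Rjj R 3 1 (by omega) * Rjj R 3 0 (by omega) * Rjj R 3 1 (by omega)

/-- The defining relation of the quadratic algebra `ℂ_R⟨ψ⁺⟩`:
`ψ⁺_i ψ⁺_j = Σ_{k,l} R^{kl}_{ij} ψ⁺_k ψ⁺_l`, with `R i j k l = R^{ij}_{kl}`. -/
inductive CpRel (m : ℕ) (R : Fin m → Fin m → Fin m → Fin m → ℂ) :
    FreeAlgebra ℂ (Fin m) → FreeAlgebra ℂ (Fin m) → Prop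
  | rel (i j : Fin m) :
      CpRel m R (FreeAlgebra.ι ℂ i * FreeAlgebra.ι ℂ j)
        (∑ k, ∑ l, R k l i j • (FreeAlgebra.ι ℂ k * FreeAlgebra.ι ℂ l))

/-- The quadratic algebra `ℂ_R⟨ψ⁺⟩`. -/
abbrev Cp (m : ℕ) (R : Fin m → Fin m → Fin m → Fin m → ℂ) := RingQuot (CpRel m R)

/-- The generator `ψ⁺_i ∈ ℂ_R⟨ψ⁺⟩`. -/
noncomputable def psiP (m : ℕ) (R : Fin m → Fin m → Fin m → Fin m → ℂ) (i : Fin m) :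
    Cp m R :=
  RingQuot.mkAlgHom ℂ (CpRel m R) (FreeAlgebra.ι ℂ i)

/-- The linear map `μ_n : (ℂ^m)^{⊗n} → ℂ_R⟨ψ⁺⟩` sending the basis vector
`e_{i₁} ⊗ ⋯ ⊗ e_{iₙ}` to the ordered product `ψ⁺_{i₁} ψ⁺_{i₂} ⋯ ψ⁺_{iₙ}`. -/
noncomputable def muN (m : ℕ) (R : Fin m → Fin m → Fin m → Fin m → ℂ) (n : ℕ) :
    ((Fin n → Fin m) → ℂ) →ₗ[ℂ] Cp m R :=
  (Pi.basisFun ℂ (Fin n → Fin m)).constr ℂ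
    fun I => (((List.finRange n).map fun t => psiP m R (I t)).prod)

namespace Stmt15
variable {m : ℕ} (R : Fin m → Fin m → Fin m → Fin m → ℂ)

abbrev V (m n : ℕ) := (Fin n → Fin m) → ℂ

/-- update positions j, j+1 of I to a, b -/
def upd {n : ℕ} (j : ℕ) (I : Fin n → Fin m) (a b : Fin m) : Fin n → Fin m :=
  fun t => if (t : ℕ) = j then a else if (t : ℕ) = j + 1 then b else I t

lemma upd_left {n j : ℕ} (hj : j + 1 < n) (I : Fin n → Fin m) (a b : Fin m) :
    upd j I a b ⟨j, by omega⟩ = a := by simp [upd]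

lemma upd_right {n j : ℕ} (hj : j + 1 < n) (I : Fin n → Fin m) (a b : Fin m) :
    upd j I a b ⟨j + 1, hj⟩ = b := by simp [upd]

lemma upd_other {n j : ℕ} (I : Fin n → Fin m) (a b : Fin m) (t : Fin n)
    (h1 : (t : ℕ) ≠ j) (h2 : (t : ℕ) ≠ j + 1) : upd j I a b t = I t := by
  simp [upd, h1, h2]

noncomputable def Lop (n j : ℕ) (hj : j + 1 < n) : V m n →ₗ[ℂ] V m n :=
  Matrix.toLin' (Rjj R n j hj)

lemma upd_inj {n j : ℕ} (hj : j + 1 < n) (I : Fin n → Fin m) {a b a' b' : Fin m}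
    (h : upd j I a b = upd j I a' b') : a = a' ∧ b = b' := by
  constructor
  · have := congrFun h ⟨j, by omega⟩; rwa [upd_left hj, upd_left hj] at this
  · have := congrFun h ⟨j + 1, hj⟩; rwa [upd_right hj, upd_right hj] at this

lemma Lop_apply (n j : ℕ) (hj : j + 1 < n) (v : V m n) (I : Fin n → Fin m) :
    Lop R n j hj v I = ∑ p : Fin m × Fin m,
      R (I ⟨j, by omega⟩) (I ⟨j + 1, hj⟩) p.1 p.2 * v (upd j I p.1 p.2) := by
  have hLHS : Lop R n j hj v I = ∑ K, Rjj R n j hj I K * v K := by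
    rfl
  rw [hLHS]
  rw [show (∑ p : Fin m × Fin m,
      R (I ⟨j, by omega⟩) (I ⟨j + 1, hj⟩) p.1 p.2 * v (upd j I p.1 p.2)) =
      ∑ p : Fin m × Fin m, Rjj R n j hj I (upd j I p.1 p.2) * v (upd j I p.1 p.2) from ?_]
  · rw [← Finset.sum_image (g := fun p : Fin m × Fin m => upd j I p.1 p.2)
      (f := fun K => Rjj R n j hj I K * v K) (by
        intro x _ y _ hxy
        obtain ⟨h1, h2⟩ := upd_inj hj I hxy
        exact Prod.ext h1 h2)]
    apply (Finset.sum_subset (Finset.subset_univ _) _).symm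
    intro K _ hK
    have : ¬ ∀ t : Fin n, (t : ℕ) ≠ j → (t : ℕ) ≠ j + 1 → I t = K t := by
      intro hall
      apply hK
      rw [Finset.mem_image]
      refine ⟨(K ⟨j, by omega⟩, K ⟨j + 1, hj⟩), Finset.mem_univ _, ?_⟩
      funext t
      by_cases h1 : (t : ℕ) = j
      · have ht : t = ⟨j, by omega⟩ := Fin.ext h1
        rw [ht]; exact upd_left hj _ _ _
      by_cases h2 : (t : ℕ) = j + 1
      · have ht : t = ⟨j + 1, hj⟩ := Fin.ext h2
        rw [ht]; exact upd_right hj _ _ _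
      · rw [upd_other _ _ _ _ h1 h2]; exact hall t h1 h2
    simp [Rjj, this]
  · apply Finset.sum_congr rfl
    intro p _
    congr 1
    rw [Rjj, if_pos, upd_left hj, upd_right hj, one_mul]
    exact fun t h1 h2 => (upd_other _ _ _ _ h1 h2).symm


/-! ### slices, insertions, extensions -/

def slice {n : ℕ} (i : Fin m) : V m (n + 1) →ₗ[ℂ] V m n :=
  LinearMap.funLeft ℂ ℂ (fun J : Fin n → Fin m => Fin.cons i J)

def slice' {n : ℕ} (c : Fin m) : V m (n + 1) →ₗ[ℂ] V m n :=
  LinearMap.funLeft ℂ ℂ (fun J : Fin n → Fin m => Fin.snoc J c)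

@[simp] lemma slice_apply {n : ℕ} (i : Fin m) (v : V m (n + 1)) (J : Fin n → Fin m) :
    slice i v J = v (Fin.cons i J) := rfl

@[simp] lemma slice'_apply {n : ℕ} (c : Fin m) (v : V m (n + 1)) (J : Fin n → Fin m) :
    slice' c v J = v (Fin.snoc J c) := rfl

/-- `1 ⊗ X` : extend an operator on the last `n` factors. -/
def ext {n : ℕ} (X : V m n →ₗ[ℂ] V m n) : V m (n + 1) →ₗ[ℂ] V m (n + 1) where
  toFun v := fun I => X (slice (I 0) v) (Fin.tail I)
  map_add' u v := by funext I; simp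
  map_smul' c v := by funext I; simp

/-- `X ⊗ 1` : extend an operator on the first `n` factors. -/
def ext' {n : ℕ} (X : V m n →ₗ[ℂ] V m n) : V m (n + 1) →ₗ[ℂ] V m (n + 1) where
  toFun v := fun I => X (slice' (I (Fin.last n)) v) (Fin.init I)
  map_add' u v := by funext I; simp
  map_smul' c v := by funext I; simp

@[simp] lemma ext_apply {n : ℕ} (X : V m n →ₗ[ℂ] V m n) (v : V m (n + 1))
    (I : Fin (n + 1) → Fin m) : ext X v I = X (slice (I 0) v) (Fin.tail I) := rfl

@[simp] lemma ext'_apply {n : ℕ} (X : V m n →ₗ[ℂ] V m n) (v : V m (n + 1))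
    (I : Fin (n + 1) → Fin m) : ext' X v I = X (slice' (I (Fin.last n)) v) (Fin.init I) := rfl

lemma slice_ext {n : ℕ} (i : Fin m) (X : V m n →ₗ[ℂ] V m n) (v : V m (n + 1)) :
    slice i (ext X v) = X (slice i v) := by
  funext J
  simp [Fin.tail_cons]

lemma slice'_ext' {n : ℕ} (c : Fin m) (X : V m n →ₗ[ℂ] V m n) (v : V m (n + 1)) :
    slice' c (ext' X v) = X (slice' c v) := by
  funext J
  simp [Fin.snoc_last, Fin.init_snoc]

lemma ext_comp {n : ℕ} (X Y : V m n →ₗ[ℂ] V m n) :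
    ext (X ∘ₗ Y) = ext X ∘ₗ ext Y := by
  apply LinearMap.ext; intro v; funext I
  simp [slice_ext]

lemma ext'_comp {n : ℕ} (X Y : V m n →ₗ[ℂ] V m n) :
    ext' (X ∘ₗ Y) = ext' X ∘ₗ ext' Y := by
  apply LinearMap.ext; intro v; funext I
  simp [slice'_ext']

@[simp] lemma ext_id {n : ℕ} : ext (m := m) (n := n) LinearMap.id = LinearMap.id := by
  apply LinearMap.ext; intro v; funext I
  simp

@[simp] lemma ext'_id {n : ℕ} : ext' (m := m) (n := n) LinearMap.id = LinearMap.id := by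
  apply LinearMap.ext; intro v; funext I
  simp

lemma cons_upd {n j : ℕ} (hj : j + 1 < n) (I : Fin (n + 1) → Fin m) (a b : Fin m) :
    Fin.cons (I 0) (upd j (Fin.tail I) a b) = upd (j + 1) I a b := by
  funext t
  induction t using Fin.cases with
  | zero => simp [upd]
  | succ s =>
    simp only [Fin.cons_succ, upd, Fin.val_succ, Fin.tail]
    split_ifs <;> first | rfl | omega

lemma snoc_upd {n j : ℕ} (hj : j + 1 < n) (I : Fin (n + 1) → Fin m) (a b : Fin m) :
    Fin.snoc (upd j (Fin.init I) a b) (I (Fin.last n)) = upd j I a b := by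
  funext t
  induction t using Fin.lastCases with
  | last =>
    have h1 : ((Fin.last n : Fin (n + 1)) : ℕ) = n := rfl
    simp only [Fin.snoc_last, upd, h1]
    rw [if_neg (by omega), if_neg (by omega)]
  | cast s =>
    simp only [Fin.snoc_castSucc, upd, Fin.coe_castSucc, Fin.init]

lemma ext_Lop {n j : ℕ} (hj : j + 1 < n) (hj2 : j + 1 + 1 < n + 1) :
    ext (Lop R n j hj) = Lop R (n + 1) (j + 1) hj2 := by
  apply LinearMap.ext; intro v; funext I
  rw [ext_apply, Lop_apply, Lop_apply]
  apply Finset.sum_congr rfl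
  intro p _
  have e1 : Fin.tail I ⟨j, by omega⟩ = I ⟨j + 1, by omega⟩ := by
    simp [Fin.tail]
  have e2 : Fin.tail I ⟨j + 1, hj⟩ = I ⟨j + 1 + 1, by omega⟩ := by
    simp [Fin.tail]
  rw [e1, e2, slice_apply, cons_upd hj]

lemma ext'_Lop {n j : ℕ} (hj : j + 1 < n) (hj2 : j + 1 < n + 1) :
    ext' (Lop R n j hj) = Lop R (n + 1) j hj2 := by
  apply LinearMap.ext; intro v; funext I
  rw [ext'_apply, Lop_apply, Lop_apply]
  apply Finset.sum_congr rfl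
  intro p _
  have e1 : Fin.init I ⟨j, by omega⟩ = I ⟨j, by omega⟩ := by
    simp [Fin.init]
  have e2 : Fin.init I ⟨j + 1, hj⟩ = I ⟨j + 1, by omega⟩ := by
    simp [Fin.init]
  rw [e1, e2, slice'_apply, snoc_upd hj]

/-- insertion of a letter in front: `v ↦ e_i ⊗ v`. -/
def insL {n : ℕ} (i : Fin m) : V m n →ₗ[ℂ] V m (n + 1) where
  toFun v := fun I => if I 0 = i then v (Fin.tail I) else 0
  map_add' u v := by funext I; by_cases h : I 0 = i <;> simp [h]
  map_smul' c v := by funext I; by_cases h : I 0 = i <;> simp [h]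

@[simp] lemma insL_apply {n : ℕ} (i : Fin m) (v : V m n) (I : Fin (n + 1) → Fin m) :
    insL i v I = if I 0 = i then v (Fin.tail I) else 0 := rfl

lemma slice_insL {n : ℕ} (i i' : Fin m) (v : V m n) :
    slice i' (insL i v) = if i' = i then v else 0 := by
  funext J
  simp only [slice_apply, insL_apply, Fin.cons_zero, Fin.tail_cons]
  split <;> simp

lemma ext_insL {n : ℕ} (X : V m n →ₗ[ℂ] V m n) (i : Fin m) :
    ext X ∘ₗ insL i = insL i ∘ₗ X := by
  apply LinearMap.ext; intro v; funext I
  simp only [LinearMap.comp_apply, ext_apply, slice_insL, insL_apply]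
  split
  · rfl
  · simp

lemma sum_insL_slice {n : ℕ} (u : V m (n + 1)) :
    ∑ i : Fin m, insL i (slice i u) = u := by
  funext I
  rw [Finset.sum_apply]
  rw [Finset.sum_eq_single (I 0)]
  · simp [Fin.cons_self_tail]
  · intro i _ hi; simp [Ne.symm hi]
  · intro h; exact absurd (Finset.mem_univ _) h


/-! ### operator identities -/

lemma upd_comm {n : ℕ} (j k : ℕ) (hjk : j + 2 ≤ k) (I : Fin n → Fin m) (a b c d : Fin m) :
    upd k (upd j I a b) c d = upd j (upd k I c d) a b := by
  funext t
  simp only [upd]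
  split_ifs <;> first | rfl | omega

lemma Lop_comm {n : ℕ} (j k : ℕ) (hjk : j + 2 ≤ k) (hj1 : j + 1 < n) (hk1 : k + 1 < n) :
    Lop R n j hj1 ∘ₗ Lop R n k hk1 = Lop R n k hk1 ∘ₗ Lop R n j hj1 := by
  apply LinearMap.ext; intro v; funext I
  simp only [LinearMap.comp_apply]
  rw [Lop_apply, Lop_apply]
  have ej : ∀ (a b : Fin m) (q : Fin m × Fin m),
      upd k I a b ⟨j, by omega⟩ = I ⟨j, by omega⟩ :=
    fun a b q => upd_other _ _ _ _ (by simp; omega) (by simp; omega)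
  have ej1 : ∀ (a b : Fin m), upd k I a b ⟨j + 1, hj1⟩ = I ⟨j + 1, hj1⟩ :=
    fun a b => upd_other _ _ _ _ (by simp; omega) (by simp; omega)
  have ek : ∀ (a b : Fin m), upd j I a b ⟨k, by omega⟩ = I ⟨k, by omega⟩ :=
    fun a b => upd_other _ _ _ _ (by simp; omega) (by simp; omega)
  have ek1 : ∀ (a b : Fin m), upd j I a b ⟨k + 1, hk1⟩ = I ⟨k + 1, hk1⟩ :=
    fun a b => upd_other _ _ _ _ (by simp; omega) (by simp; omega)
  calc ∑ p : Fin m × Fin m, R (I ⟨j, by omega⟩) (I ⟨j + 1, hj1⟩) p.1 p.2 *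
          Lop R n k hk1 v (upd j I p.1 p.2)
      = ∑ p : Fin m × Fin m, ∑ q : Fin m × Fin m,
          R (I ⟨j, by omega⟩) (I ⟨j + 1, hj1⟩) p.1 p.2 *
          (R (I ⟨k, by omega⟩) (I ⟨k + 1, hk1⟩) q.1 q.2 *
            v (upd k (upd j I p.1 p.2) q.1 q.2)) := by
        apply Finset.sum_congr rfl; intro p _
        rw [Lop_apply, Finset.mul_sum]
        apply Finset.sum_congr rfl; intro q _
        rw [ek, ek1]
    _ = ∑ q : Fin m × Fin m, ∑ p : Fin m × Fin m,
          R (I ⟨k, by omega⟩) (I ⟨k + 1, hk1⟩) q.1 q.2 *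
          (R (I ⟨j, by omega⟩) (I ⟨j + 1, hj1⟩) p.1 p.2 *
            v (upd j (upd k I q.1 q.2) p.1 p.2)) := by
        rw [Finset.sum_comm]
        apply Finset.sum_congr rfl; intro p _
        apply Finset.sum_congr rfl; intro q _
        rw [upd_comm j k hjk]; ring
    _ = ∑ q : Fin m × Fin m, R (I ⟨k, by omega⟩) (I ⟨k + 1, hk1⟩) q.1 q.2 *
          Lop R n j hj1 v (upd k I q.1 q.2) := by
        apply Finset.sum_congr rfl; intro q _
        rw [Lop_apply, Finset.mul_sum]
        apply Finset.sum_congr rfl; intro p _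
        rw [ej _ _ q, ej1]

variable {R}

lemma Lop_invol (hinv : IsInvolutiveR R) :
    ∀ (n j : ℕ) (hj : j + 1 < n), Lop R n j hj ∘ₗ Lop R n j hj = LinearMap.id := by
  intro n
  induction n with
  | zero => intro j hj; omega
  | succ n ih =>
    intro j hj
    cases j with
    | zero =>
      rcases n with _ | _ | n'
      · omega
      · have h1 : Lop R 2 0 hj ∘ₗ Lop R 2 0 hj =
            Matrix.toLin' (Rjj R 2 0 (by omega) * Rjj R 2 0 (by omega)) :=
          (Matrix.toLin'_mul _ _).symm
        rw [h1, show Rjj R 2 0 (by omega) * Rjj R 2 0 (by omega) = 1 from hinv,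
          Matrix.toLin'_one]
      · rw [← ext'_Lop R (show 0 + 1 < n' + 2 by omega) hj, ← ext'_comp, ih 0 (by omega),
          ext'_id]
    | succ j' =>
      rw [← ext_Lop R (show j' + 1 < n by omega) hj, ← ext_comp, ih j' (by omega), ext_id]

lemma Lop_braid (hybe : SatisfiesYBE R) :
    ∀ (n j : ℕ) (h1 : j + 1 < n) (h2 : j + 1 + 1 < n),
      Lop R n j h1 ∘ₗ Lop R n (j + 1) h2 ∘ₗ Lop R n j h1 =
        Lop R n (j + 1) h2 ∘ₗ Lop R n j h1 ∘ₗ Lop R n (j + 1) h2 := by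
  intro n
  induction n with
  | zero => intro j h1 h2; omega
  | succ n ih =>
    intro j h1 h2
    cases j with
    | zero =>
      rcases n with _ | _ | _ | n'
      · omega
      · omega
      · have e : ∀ (A B C : Matrix (Fin 3 → Fin m) (Fin 3 → Fin m) ℂ),
            Matrix.toLin' (A * B * C) =
              Matrix.toLin' A ∘ₗ Matrix.toLin' B ∘ₗ Matrix.toLin' C := by
          intro A B C
          rw [Matrix.toLin'_mul, Matrix.toLin'_mul, LinearMap.comp_assoc]
        have h3 := congrArg Matrix.toLin' hybe
        rw [e, e] at h3
        exact h3
      · rw [← ext'_Lop R (show 0 + 1 < n' + 3 by omega) h1,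
          ← ext'_Lop R (show 0 + 1 + 1 < n' + 3 by omega) h2,
          ← ext'_comp, ← ext'_comp, ih 0 (by omega) (by omega), ext'_comp, ext'_comp]
    | succ j' =>
      rw [← ext_Lop R (show j' + 1 < n by omega) h1,
        ← ext_Lop R (show j' + 1 + 1 < n by omega) h2,
        ← ext_comp, ← ext_comp, ih j' (by omega) (by omega), ext_comp, ext_comp]


lemma Lop_comm' {n : ℕ} (j k : ℕ) (hjk : j + 2 ≤ k) (hj1 : j + 1 < n) (hk1 : k + 1 < n) :
    Lop R n j hj1 * Lop R n k hk1 = Lop R n k hk1 * Lop R n j hj1 :=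
  Lop_comm R j k hjk hj1 hk1

lemma Lop_invol' (hinv : IsInvolutiveR R) {n j : ℕ} (hj : j + 1 < n) :
    Lop R n j hj * Lop R n j hj = 1 :=
  Lop_invol hinv n j hj

lemma Lop_braid' (hybe : SatisfiesYBE R) {n j : ℕ} (h1 : j + 1 < n) (h2 : j + 1 + 1 < n) :
    Lop R n j h1 * (Lop R n (j + 1) h2 * Lop R n j h1) =
      Lop R n (j + 1) h2 * (Lop R n j h1 * Lop R n (j + 1) h2) :=
  Lop_braid hybe n j h1 h2

/-! ### recursive symmetrizers -/

variable (R)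

noncomputable def Dop (n : ℕ) : ℕ → (V m n →ₗ[ℂ] V m n)
  | 0 => LinearMap.id
  | (k + 1) => if h : k + 1 < n then Lop R n k h * Dop n k else LinearMap.id

noncomputable def Eop (n : ℕ) : ℕ → (V m n →ₗ[ℂ] V m n)
  | 0 => LinearMap.id
  | (k + 1) => if h : k + 1 < n then Eop n k * Lop R n k h else LinearMap.id

lemma Dop_succ {n k : ℕ} (h : k + 1 < n) : Dop R n (k + 1) = Lop R n k h * Dop R n k := by
  rw [Dop, dif_pos h]

lemma Eop_succ {n k : ℕ} (h : k + 1 < n) : Eop R n (k + 1) = Eop R n k * Lop R n k h := by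
  rw [Eop, dif_pos h]

noncomputable def Fsym : (n : ℕ) → (V m n →ₗ[ℂ] V m n)
  | 0 => LinearMap.id
  | (n + 1) => ((n : ℂ) + 1)⁻¹ •
      ∑ k ∈ Finset.range (n + 1), (Dop R (n + 1) k * ext (Fsym n))

noncomputable def Gsym : (n : ℕ) → (V m n →ₗ[ℂ] V m n)
  | 0 => LinearMap.id
  | (n + 1) => ((n : ℂ) + 1)⁻¹ •
      ∑ k ∈ Finset.range (n + 1), (ext (Gsym n) * Eop R (n + 1) k)

variable {R}

/-- commutation of `L_j` past `D_k` for `k < j`. -/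
lemma Dop_comm {n : ℕ} : ∀ (k j : ℕ) (hkj : k < j) (hj : j + 1 < n),
    Lop R n j hj * Dop R n k = Dop R n k * Lop R n j hj := by
  intro k
  induction k with
  | zero => intro j _ _; simp only [Dop, ← Module.End.one_eq_id, mul_one, one_mul]
  | succ k ihk =>
    intro j hkj hj
    by_cases h : k + 1 < n
    · rw [Dop_succ R h, ← mul_assoc, (Lop_comm' (R := R) k j (by omega) h hj).symm,
        mul_assoc, ihk j (by omega) hj, mul_assoc]
    · rw [Dop, dif_neg h]; simp only [← Module.End.one_eq_id, mul_one, one_mul]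

/-- mirror commutation of `L_j` past `E_k` for `k < j`. -/
lemma Eop_comm {n : ℕ} : ∀ (k j : ℕ) (hkj : k < j) (hj : j + 1 < n),
    Eop R n k * Lop R n j hj = Lop R n j hj * Eop R n k := by
  intro k
  induction k with
  | zero => intro j _ _; simp only [Eop, ← Module.End.one_eq_id, mul_one, one_mul]
  | succ k ihk =>
    intro j hkj hj
    by_cases h : k + 1 < n
    · rw [Eop_succ R h, mul_assoc, Lop_comm' (R := R) k j (by omega) h hj,
        ← mul_assoc, ihk j (by omega) hj, mul_assoc]
    · rw [Eop, dif_neg h]; simp only [← Module.End.one_eq_id, mul_one, one_mul]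

/-- move `L_j` past `D_k`, `j + 2 ≤ k`. -/
lemma Dop_move (hinv : IsInvolutiveR R) (hybe : SatisfiesYBE R) {n : ℕ} :
    ∀ (k j : ℕ) (hjk : j + 2 ≤ k) (hk : k < n) (hj : j + 1 < n) (hj1 : j + 1 + 1 < n),
    Lop R n j hj * Dop R n k = Dop R n k * Lop R n (j + 1) hj1 := by
  intro k
  induction k with
  | zero => omega
  | succ k ihk =>
    intro j hjk hk hj hj1
    rcases eq_or_lt_of_le hjk with heq | hlt
    · obtain rfl : k = j + 1 := by omega
      rw [Dop_succ R (show j + 1 + 1 < n from hk), Dop_succ R (show j + 1 < n by omega)]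
      have hbr := Lop_braid' (R := R) hybe hj hj1
      have hdc := Dop_comm (R := R) j (j + 1) (by omega) hj1
      simp only [← mul_assoc]
      simp only [← mul_assoc] at hbr
      rw [hbr, mul_assoc (Lop R n (j + 1) hj1 * Lop R n j hj), hdc, ← mul_assoc]

    · have hk' : k < n := by omega
      rw [Dop_succ R (show k + 1 < n from hk)]
      have hcomm : Lop R n j hj * Lop R n k (by omega) =
          Lop R n k (by omega) * Lop R n j hj := by
        have := Lop_comm R j k (by omega) hj (by omega)
        simp only [Module.End.mul_eq_comp]
        exact this
      rw [← mul_assoc, hcomm, mul_assoc, ihk j (by omega) hk' hj hj1, ← mul_assoc]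

/-- move `L_j` past `E_k`, `j + 2 ≤ k`. -/
lemma Eop_move (hinv : IsInvolutiveR R) (hybe : SatisfiesYBE R) {n : ℕ} :
    ∀ (k j : ℕ) (hjk : j + 2 ≤ k) (hk : k < n) (hj : j + 1 < n) (hj1 : j + 1 + 1 < n),
    Eop R n k * Lop R n j hj = Lop R n (j + 1) hj1 * Eop R n k := by
  intro k
  induction k with
  | zero => omega
  | succ k ihk =>
    intro j hjk hk hj hj1
    rcases eq_or_lt_of_le hjk with heq | hlt
    · obtain rfl : k = j + 1 := by omega
      rw [Eop_succ R (show j + 1 + 1 < n from hk), Eop_succ R (show j + 1 < n by omega)]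
      have hbr := Lop_braid' (R := R) hybe hj hj1
      have hec := Eop_comm (R := R) j (j + 1) (by omega) hj1
      rw [mul_assoc (Eop R n j), mul_assoc (Eop R n j), mul_assoc (Lop R n j hj), hbr,
        ← mul_assoc (Eop R n j), ← mul_assoc (Eop R n j), hec, mul_assoc, mul_assoc,
        ← mul_assoc (Eop R n j)]
    · have hk' : k < n := by omega
      rw [Eop_succ R (show k + 1 < n from hk)]
      have hcomm : Lop R n k (by omega) * Lop R n j hj =
          Lop R n j hj * Lop R n k (by omega) := by
        have := Lop_comm R j k (by omega) hj (by omega)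
        simp only [Module.End.mul_eq_comp]
        exact this.symm
      rw [mul_assoc, hcomm, ← mul_assoc, ihk j (by omega) hk' hj hj1, mul_assoc]


lemma Fsym_succ (R : Fin m → Fin m → Fin m → Fin m → ℂ) (n : ℕ) : Fsym R (n + 1) =
    ((n : ℂ) + 1)⁻¹ • ∑ k ∈ Finset.range (n + 1), (Dop R (n + 1) k * ext (Fsym R n)) := by
  rw [Fsym]

lemma Gsym_succ (R : Fin m → Fin m → Fin m → Fin m → ℂ) (n : ℕ) : Gsym R (n + 1) =
    ((n : ℂ) + 1)⁻¹ • ∑ k ∈ Finset.range (n + 1), (ext (Gsym R n) * Eop R (n + 1) k) := by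
  rw [Gsym]

lemma ext_mul {n : ℕ} (X Y : V m n →ₗ[ℂ] V m n) : ext (X * Y) = ext X * ext Y :=
  ext_comp X Y

lemma swap_mem_range {n j : ℕ} (hj : j + 1 < n + 1) :
    ∀ i : ℕ, i ∈ Finset.range (n + 1) ↔ Equiv.swap j (j + 1) i ∈ Finset.range (n + 1) := by
  intro i
  rcases eq_or_ne i j with rfl | h1
  · simp [Equiv.swap_apply_left]; omega
  rcases eq_or_ne i (j + 1) with rfl | h2
  · simp [Equiv.swap_apply_right]; omega
  · rw [Equiv.swap_apply_of_ne_of_ne h1 h2]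

/-- Left invariance: `L_j F_n = F_n`. -/
lemma Linv (hinv : IsInvolutiveR R) (hybe : SatisfiesYBE R) :
    ∀ (n j : ℕ) (hj : j + 1 < n), Lop R n j hj * Fsym R n = Fsym R n := by
  intro n
  induction n with
  | zero => intro j hj; omega
  | succ n ih =>
    intro j hj
    rw [Fsym, mul_smul_comm, Finset.mul_sum]
    have key : ∀ k ∈ Finset.range (n + 1),
        Lop R (n + 1) j hj * (Dop R (n + 1) k * ext (Fsym R n)) =
        Dop R (n + 1) (Equiv.swap j (j + 1) k) * ext (Fsym R n) := by
      intro k hk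
      rw [Finset.mem_range] at hk
      rcases lt_trichotomy k j with hlt | rfl | hgt
      · obtain ⟨j', rfl⟩ : ∃ j', j = j' + 1 := ⟨j - 1, by omega⟩
        rw [← mul_assoc, Dop_comm k (j' + 1) hlt hj, mul_assoc,
          Equiv.swap_apply_of_ne_of_ne (by omega) (by omega)]
        congr 1
        rw [← ext_Lop R (show j' + 1 < n by omega) hj, ← ext_mul, ih j' (by omega)]
      · rw [← mul_assoc, ← Dop_succ R hj, Equiv.swap_apply_left]
      · by_cases hk1 : k = j + 1
        · subst hk1
          rw [Dop_succ R hj, ← mul_assoc, ← mul_assoc, Lop_invol' hinv hj, one_mul,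
            Equiv.swap_apply_right]
        · have hjk : j + 2 ≤ k := by omega
          have hj1 : j + 1 + 1 < n + 1 := by omega
          rw [← mul_assoc, Dop_move hinv hybe k j hjk hk hj hj1, mul_assoc,
            Equiv.swap_apply_of_ne_of_ne (by omega) (by omega)]
          congr 1
          rw [← ext_Lop R (show j + 1 < n by omega) hj1, ← ext_mul, ih j (by omega)]
    rw [Finset.sum_congr rfl key]
    rw [show ∑ k ∈ Finset.range (n + 1), Dop R (n + 1) (Equiv.swap j (j + 1) k) * ext (Fsym R n)
        = ∑ k ∈ Finset.range (n + 1), Dop R (n + 1) k * ext (Fsym R n) from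
      Finset.sum_equiv (Equiv.swap j (j + 1)) (swap_mem_range hj) (fun i _ => rfl)]

/-- Right invariance: `G_n L_j = G_n`. -/
lemma Rinv (hinv : IsInvolutiveR R) (hybe : SatisfiesYBE R) :
    ∀ (n j : ℕ) (hj : j + 1 < n), Gsym R n * Lop R n j hj = Gsym R n := by
  intro n
  induction n with
  | zero => intro j hj; omega
  | succ n ih =>
    intro j hj
    rw [Gsym, smul_mul_assoc, Finset.sum_mul]
    have key : ∀ k ∈ Finset.range (n + 1),
        (ext (Gsym R n) * Eop R (n + 1) k) * Lop R (n + 1) j hj =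
        ext (Gsym R n) * Eop R (n + 1) (Equiv.swap j (j + 1) k) := by
      intro k hk
      rw [Finset.mem_range] at hk
      rcases lt_trichotomy k j with hlt | rfl | hgt
      · obtain ⟨j', rfl⟩ : ∃ j', j = j' + 1 := ⟨j - 1, by omega⟩
        rw [mul_assoc, Eop_comm k (j' + 1) hlt hj, ← mul_assoc,
          Equiv.swap_apply_of_ne_of_ne (by omega) (by omega)]
        congr 1
        rw [← ext_Lop R (show j' + 1 < n by omega) hj, ← ext_mul, ih j' (by omega)]
      · rw [mul_assoc, ← Eop_succ R hj, Equiv.swap_apply_left]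
      · by_cases hk1 : k = j + 1
        · subst hk1
          rw [Eop_succ R hj, mul_assoc, mul_assoc, Lop_invol' hinv hj, mul_one,
            Equiv.swap_apply_right]
        · have hjk : j + 2 ≤ k := by omega
          have hj1 : j + 1 + 1 < n + 1 := by omega
          rw [mul_assoc, Eop_move hinv hybe k j hjk hk hj hj1, ← mul_assoc,
            Equiv.swap_apply_of_ne_of_ne (by omega) (by omega)]
          congr 1
          rw [← ext_Lop R (show j + 1 < n by omega) hj1, ← ext_mul, ih j (by omega)]
    rw [Finset.sum_congr rfl key]
    rw [show ∑ k ∈ Finset.range (n + 1), ext (Gsym R n) * Eop R (n + 1) (Equiv.swap j (j + 1) k)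
        = ∑ k ∈ Finset.range (n + 1), ext (Gsym R n) * Eop R (n + 1) k from
      Finset.sum_equiv (Equiv.swap j (j + 1)) (swap_mem_range hj) (fun i _ => rfl)]


/-! ### the fixed subspace and the relation subspace -/

variable (R)

noncomputable def Fix (n : ℕ) : Submodule ℂ (V m n) :=
  ⨅ (j : ℕ) (hj : j + 1 < n), LinearMap.ker (Lop R n j hj - LinearMap.id)

noncomputable def Kspan (n : ℕ) : Submodule ℂ (V m n) :=
  ⨆ (j : ℕ) (hj : j + 1 < n), LinearMap.range (Lop R n j hj - LinearMap.id)

variable {R}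

lemma mem_Fix_iff {n : ℕ} {x : V m n} :
    x ∈ Fix R n ↔ ∀ (j : ℕ) (hj : j + 1 < n), Lop R n j hj x = x := by
  simp only [Fix, Submodule.mem_iInf, LinearMap.mem_ker, LinearMap.sub_apply,
    LinearMap.id_apply, sub_eq_zero]

lemma sub_mem_Kspan {n j : ℕ} (hj : j + 1 < n) (v : V m n) :
    Lop R n j hj v - v ∈ Kspan R n := by
  have h : Lop R n j hj v - v =
      ((Lop R n j hj - LinearMap.id : V m n →ₗ[ℂ] V m n)) v := by
    rw [LinearMap.sub_apply, LinearMap.id_apply]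
  rw [h]
  exact Submodule.mem_iSup_of_mem j (Submodule.mem_iSup_of_mem hj ⟨v, rfl⟩)

lemma slice_mem_Fix {n : ℕ} {x : V m (n + 1)} (hx : x ∈ Fix R (n + 1)) (i : Fin m) :
    slice i x ∈ Fix R n := by
  rw [mem_Fix_iff]
  intro j hj
  conv_rhs => rw [show x = Lop R (n + 1) (j + 1) (by omega) x from
    ((mem_Fix_iff.mp hx) (j + 1) (by omega)).symm]
  rw [← ext_Lop R hj (by omega), slice_ext]

lemma insL_mem_Kspan {n : ℕ} {u : V m n} (hu : u ∈ Kspan R n) (i : Fin m) :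
    insL i u ∈ Kspan R (n + 1) := by
  revert u
  suffices h : Kspan R n ≤ Submodule.comap (insL i) (Kspan R (n + 1)) by
    intro u hu; exact h hu
  apply iSup_le; intro j; apply iSup_le; intro hj
  rintro _ ⟨v, rfl⟩
  simp only [Submodule.mem_comap, LinearMap.sub_apply, LinearMap.id_apply, map_sub]
  have h2 : insL i (Lop R n j hj v) = Lop R (n + 1) (j + 1) (by omega) (insL i v) := by
    rw [← ext_Lop R hj (by omega)]
    have h3 := LinearMap.congr_fun (ext_insL (Lop R n j hj) i) v
    simpa using h3.symm
  rw [h2]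
  exact sub_mem_Kspan (by omega) (insL i v)

lemma slices_mem_Kspan {n : ℕ} {u : V m (n + 1)}
    (h : ∀ i : Fin m, slice i u ∈ Kspan R n) : u ∈ Kspan R (n + 1) := by
  rw [← sum_insL_slice u]
  exact Submodule.sum_mem _ fun i _ => insL_mem_Kspan (h i) i

lemma Dop_fix {n : ℕ} {x : V m n} (hx : x ∈ Fix R n) : ∀ k, Dop R n k x = x := by
  intro k
  induction k with
  | zero => rfl
  | succ k ih =>
    by_cases h : k + 1 < n
    · rw [Dop_succ R h, Module.End.mul_apply, ih, mem_Fix_iff.mp hx k h]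
    · rw [Dop, dif_neg h]; rfl

lemma Eop_fix {n : ℕ} {x : V m n} (hx : x ∈ Fix R n) : ∀ k, Eop R n k x = x := by
  intro k
  induction k with
  | zero => rfl
  | succ k ih =>
    by_cases h : k + 1 < n
    · rw [Eop_succ R h, Module.End.mul_apply, mem_Fix_iff.mp hx k h, ih]
    · rw [Eop, dif_neg h]; rfl

lemma avg_smul {M : Type*} [AddCommMonoid M] [Module ℂ M] {n : ℕ} {x : M} :
    ((n : ℂ) + 1)⁻¹ • ((n + 1) • x) = x := by
  have h : (((n : ℕ) + 1 : ℕ) : ℂ) = (n : ℂ) + 1 := by push_cast; ring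
  rw [← Nat.cast_smul_eq_nsmul ℂ, smul_smul, h,
    inv_mul_cancel₀ (Nat.cast_add_one_ne_zero n), one_smul]

lemma Ffix : ∀ (n : ℕ) {x : V m n}, x ∈ Fix R n → Fsym R n x = x := by
  intro n
  induction n with
  | zero => intro x _; rfl
  | succ n ih =>
    intro x hx
    have hext : ext (Fsym R n) x = x := by
      funext I
      rw [ext_apply, ih (slice_mem_Fix hx (I 0)), slice_apply, Fin.cons_self_tail]
    rw [Fsym_succ, LinearMap.smul_apply, LinearMap.sum_apply]
    have hsum : ∑ k ∈ Finset.range (n + 1), (Dop R (n + 1) k * ext (Fsym R n)) x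
        = ∑ _k ∈ Finset.range (n + 1), x :=
      Finset.sum_congr rfl fun k _ => by
        rw [Module.End.mul_apply, hext, Dop_fix hx k]
    rw [hsum, Finset.sum_const, Finset.card_range]
    exact avg_smul

lemma Gfix : ∀ (n : ℕ) {x : V m n}, x ∈ Fix R n → Gsym R n x = x := by
  intro n
  induction n with
  | zero => intro x _; rfl
  | succ n ih =>
    intro x hx
    have hext : ext (Gsym R n) x = x := by
      funext I
      rw [ext_apply, ih (slice_mem_Fix hx (I 0)), slice_apply, Fin.cons_self_tail]
    rw [Gsym_succ, LinearMap.smul_apply, LinearMap.sum_apply]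
    have hsum : ∑ k ∈ Finset.range (n + 1), (ext (Gsym R n) * Eop R (n + 1) k) x
        = ∑ _k ∈ Finset.range (n + 1), x :=
      Finset.sum_congr rfl fun k _ => by
        rw [Module.End.mul_apply, Eop_fix hx k, hext]
    rw [hsum, Finset.sum_const, Finset.card_range]
    exact avg_smul

lemma Dop_sub_mem {n : ℕ} (w : V m n) : ∀ k, Dop R n k w - w ∈ Kspan R n := by
  intro k
  induction k with
  | zero => simp [Dop]
  | succ k ih =>
    by_cases h : k + 1 < n
    · rw [Dop_succ R h, Module.End.mul_apply]
      have : Lop R n k h (Dop R n k w) - w =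
          (Lop R n k h (Dop R n k w) - Dop R n k w) + (Dop R n k w - w) := by abel
      rw [this]
      exact Submodule.add_mem _ (sub_mem_Kspan h _) ih
    · rw [Dop, dif_neg h]; simp

lemma Fsub : ∀ (n : ℕ) (v : V m n), Fsym R n v - v ∈ Kspan R n := by
  intro n
  induction n with
  | zero => intro v; simp [Fsym]
  | succ n ih =>
    intro v
    set w := ext (Fsym R n) v with hw
    have hwv : w - v ∈ Kspan R (n + 1) := by
      apply slices_mem_Kspan
      intro i
      rw [map_sub, hw, slice_ext]
      exact ih (slice i v)
    have hdec : Fsym R (n + 1) v - v =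
        ((n : ℂ) + 1)⁻¹ • (∑ k ∈ Finset.range (n + 1), (Dop R (n + 1) k w - w)) + (w - v) := by
      rw [Fsym_succ, LinearMap.smul_apply, LinearMap.sum_apply]
      have hsum : ∑ k ∈ Finset.range (n + 1), (Dop R (n + 1) k * ext (Fsym R n)) v
          = ∑ k ∈ Finset.range (n + 1), Dop R (n + 1) k w :=
        Finset.sum_congr rfl fun k _ => by rw [Module.End.mul_apply]
      rw [hsum]
      have hsplit : ∑ k ∈ Finset.range (n + 1), Dop R (n + 1) k w
          = (∑ k ∈ Finset.range (n + 1), (Dop R (n + 1) k w - w)) + (n + 1) • w := by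
        rw [Finset.sum_sub_distrib, Finset.sum_const, Finset.card_range]
        abel
      rw [hsplit, smul_add, avg_smul]
      abel
    rw [hdec]
    exact Submodule.add_mem _
      (Submodule.smul_mem _ _ (Submodule.sum_mem _ fun k _ => Dop_sub_mem w k)) hwv

lemma Kspan_le_ker_Gsym (hinv : IsInvolutiveR R) (hybe : SatisfiesYBE R) (n : ℕ) :
    Kspan R n ≤ LinearMap.ker (Gsym R n) := by
  apply iSup_le; intro j; apply iSup_le; intro hj
  rintro _ ⟨v, rfl⟩
  rw [LinearMap.mem_ker, LinearMap.sub_apply, LinearMap.id_apply, map_sub,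
    show Gsym R n (Lop R n j hj v) = (Gsym R n * Lop R n j hj) v from rfl,
    Rinv hinv hybe n j hj, sub_self]

lemma Fix_disjoint_Kspan (hinv : IsInvolutiveR R) (hybe : SatisfiesYBE R) (n : ℕ) :
    Fix R n ⊓ Kspan R n = ⊥ := by
  rw [eq_bot_iff]
  intro x hx
  rw [Submodule.mem_inf] at hx
  have h1 : Gsym R n x = x := Gfix n hx.1
  have h2 : Gsym R n x = 0 := Kspan_le_ker_Gsym hinv hybe n hx.2
  rw [Submodule.mem_bot, ← h1, h2]

lemma Fsym_mem_Fix (hinv : IsInvolutiveR R) (hybe : SatisfiesYBE R) (n : ℕ) (v : V m n) :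
    Fsym R n v ∈ Fix R n := by
  rw [mem_Fix_iff]
  intro j hj
  rw [show Lop R n j hj (Fsym R n v) = (Lop R n j hj * Fsym R n) v from rfl,
    Linv hinv hybe n j hj]

lemma Fsym_kills (hinv : IsInvolutiveR R) (hybe : SatisfiesYBE R) (n : ℕ) {v : V m n}
    (hv : v ∈ Kspan R n) : Fsym R n v = 0 := by
  have h1 : Fsym R n v ∈ Fix R n := Fsym_mem_Fix hinv hybe n v
  have h2 : Fsym R n v ∈ Kspan R n := by
    have := Fsub (R := R) n v
    have h3 : Fsym R n v = (Fsym R n v - v) + v := by abel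
    rw [h3]
    exact Submodule.add_mem _ this hv
  have := Fix_disjoint_Kspan hinv hybe n
  rw [eq_bot_iff] at this
  exact (Submodule.mem_bot ℂ).mp (this ⟨h1, h2⟩)

lemma ker_Fsym_eq_Kspan (hinv : IsInvolutiveR R) (hybe : SatisfiesYBE R) (n : ℕ) :
    LinearMap.ker (Fsym R n) = Kspan R n := by
  apply le_antisymm
  · intro v hv
    rw [LinearMap.mem_ker] at hv
    have := Fsub (R := R) n v
    rw [hv, zero_sub] at this
    simpa using Submodule.neg_mem _ this
  · intro v hv
    exact Fsym_kills hinv hybe n hv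

lemma isCompl_Kspan_Fix (hinv : IsInvolutiveR R) (hybe : SatisfiesYBE R) (n : ℕ) :
    IsCompl (Kspan R n) (Fix R n) := by
  constructor
  · rw [disjoint_iff, inf_comm]
    exact Fix_disjoint_Kspan hinv hybe n
  · rw [codisjoint_iff, eq_top_iff]
    intro v _
    have : v = (v - Fsym R n v) + Fsym R n v := by abel
    rw [this]
    apply Submodule.add_mem_sup _ (Fsym_mem_Fix hinv hybe n v)
    have := Fsub (R := R) n v
    simpa using Submodule.neg_mem _ this


/-! ### consequences of invariance -/

lemma Fidem (hinv : IsInvolutiveR R) (hybe : SatisfiesYBE R) (n : ℕ) :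
    Fsym R n * Fsym R n = Fsym R n := by
  apply LinearMap.ext; intro v
  rw [Module.End.mul_apply]
  exact Ffix n (Fsym_mem_Fix hinv hybe n v)

lemma FextF (hinv : IsInvolutiveR R) (hybe : SatisfiesYBE R) (n : ℕ) :
    Fsym R (n + 1) * ext (Fsym R n) = Fsym R (n + 1) := by
  rw [Fsym_succ, smul_mul_assoc, Finset.sum_mul]
  congr 1
  apply Finset.sum_congr rfl
  intro k _
  rw [mul_assoc, ← ext_mul, Fidem hinv hybe n]

lemma Fsym_Lop (hinv : IsInvolutiveR R) (hybe : SatisfiesYBE R) {n j : ℕ} (hj : j + 1 < n) :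
    Fsym R n * Lop R n j hj = Fsym R n := by
  apply LinearMap.ext; intro v
  rw [Module.End.mul_apply]
  have h : Fsym R n (Lop R n j hj v) - Fsym R n v = Fsym R n (Lop R n j hj v - v) := by
    rw [map_sub]
  have h2 : Fsym R n (Lop R n j hj v - v) = 0 :=
    Fsym_kills hinv hybe n (sub_mem_Kspan hj v)
  exact sub_eq_zero.mp (h.trans h2)

/-! ### the Fock representation -/

abbrev Fock (m : ℕ) := DirectSum ℕ (fun k => V m k)

noncomputable def aOp (R : Fin m → Fin m → Fin m → Fin m → ℂ) (i : Fin m) :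
    Fock m →ₗ[ℂ] Fock m :=
  DirectSum.toModule ℂ ℕ (Fock m) fun k =>
    (DirectSum.lof ℂ ℕ (fun k => V m k) (k + 1)) ∘ₗ (Fsym R (k + 1) ∘ₗ insL i)

lemma aOp_lof (i : Fin m) (k : ℕ) (v : V m k) :
    aOp R i (DirectSum.lof ℂ ℕ (fun k => V m k) k v) =
      DirectSum.lof ℂ ℕ (fun k => V m k) (k + 1) (Fsym R (k + 1) (insL i v)) := by
  rw [aOp, DirectSum.toModule_lof]
  rfl

lemma Fins (hinv : IsInvolutiveR R) (hybe : SatisfiesYBE R) (k : ℕ) (i : Fin m) (v : V m k) :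
    Fsym R (k + 1) (insL i (Fsym R k v)) = Fsym R (k + 1) (insL i v) := by
  have h1 : insL i (Fsym R k v) = ext (Fsym R k) (insL i v) :=
    (LinearMap.congr_fun (ext_insL (Fsym R k) i) v).symm
  rw [h1, show Fsym R (k + 1) (ext (Fsym R k) (insL i v))
      = (Fsym R (k + 1) * ext (Fsym R k)) (insL i v) from rfl, FextF hinv hybe k]

lemma tail_tail_upd (t : ℕ) (I : Fin (t + 2) → Fin m) (a b : Fin m) :
    Fin.tail (Fin.tail (upd 0 I a b)) = Fin.tail (Fin.tail I) := by
  funext s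
  show upd 0 I a b s.succ.succ = I s.succ.succ
  exact upd_other _ _ _ _ (by simp [Fin.val_succ]) (by simp [Fin.val_succ])

lemma ins2 (t : ℕ) (i j : Fin m) (v : V m t) :
    ∑ p : Fin m × Fin m, R p.1 p.2 i j • insL p.1 (insL p.2 v)
      = Lop R (t + 1 + 1) 0 (by omega) (insL i (insL j v)) := by
  funext I
  rw [Lop_apply, Finset.sum_apply]
  have hu0 : ∀ a b : Fin m, upd 0 I a b 0 = a := fun a b => upd_left (by omega) I a b
  have hu1 : ∀ a b : Fin m, Fin.tail (upd 0 I a b) 0 = b := fun a b => upd_right (by omega) I a b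
  have hI0 : I ⟨0, by omega⟩ = I 0 := rfl
  have hI1 : I ⟨0 + 1, by omega⟩ = Fin.tail I 0 := rfl
  have htt : ∀ a b : Fin m, Fin.tail (Fin.tail (upd 0 I a b)) = Fin.tail (Fin.tail I) := by
    intro a b
    funext s
    show upd 0 I a b s.succ.succ = I s.succ.succ
    exact upd_other _ _ _ _ (by simp [Fin.val_succ]) (by simp [Fin.val_succ])
  simp only [Pi.smul_apply, insL_apply, smul_eq_mul, hu0, hu1, htt, hI0, hI1,
    mul_ite, mul_zero, Fintype.sum_prod_type]
  rw [Finset.sum_comm]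
  simp [Finset.sum_ite_eq, Finset.sum_ite_eq']

set_option maxHeartbeats 2000000 in
/-- the commutation relation holds in the Fock representation. -/
lemma aOp_rel (hinv : IsInvolutiveR R) (hybe : SatisfiesYBE R) (i j : Fin m) :
    aOp R i * aOp R j = ∑ p : Fin m × Fin m, R p.1 p.2 i j • (aOp R p.1 * aOp R p.2) := by
  apply DirectSum.linearMap_ext
  intro t
  apply LinearMap.ext
  intro v
  simp only [LinearMap.comp_apply, Module.End.mul_apply, LinearMap.sum_apply,
    LinearMap.smul_apply]
  rw [aOp_lof, aOp_lof, Fins hinv hybe]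
  have hstep : ∑ p : Fin m × Fin m, R p.1 p.2 i j •
      aOp R p.1 (aOp R p.2 (DirectSum.lof ℂ ℕ (fun k => V m k) t v)) =
      DirectSum.lof ℂ ℕ (fun k => V m k) (t + 1 + 1)
        (Fsym R (t + 1 + 1) (insL i (insL j v))) := by
    have h1 : ∀ p : Fin m × Fin m, R p.1 p.2 i j •
        aOp R p.1 (aOp R p.2 (DirectSum.lof ℂ ℕ (fun k => V m k) t v)) =
        DirectSum.lof ℂ ℕ (fun k => V m k) (t + 1 + 1)
          (Fsym R (t + 1 + 1) (R p.1 p.2 i j • insL p.1 (insL p.2 v))) := by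
      intro p
      rw [aOp_lof, aOp_lof, Fins hinv hybe, map_smul, map_smul]
    rw [Finset.sum_congr rfl fun p _ => h1 p, ← map_sum, ← map_sum, ins2,
      show Fsym R (t + 1 + 1) (Lop R (t + 1 + 1) 0 (by omega) (insL i (insL j v)))
        = (Fsym R (t + 1 + 1) * Lop R (t + 1 + 1) 0 (by omega)) (insL i (insL j v)) from rfl,
      Fsym_Lop hinv hybe]
  exact hstep.symm

noncomputable def phi (R : Fin m → Fin m → Fin m → Fin m → ℂ) :
    FreeAlgebra ℂ (Fin m) →ₐ[ℂ] Module.End ℂ (Fock m) :=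
  FreeAlgebra.lift ℂ fun i => (aOp R i : Module.End ℂ (Fock m))

lemma phi_rel (hinv : IsInvolutiveR R) (hybe : SatisfiesYBE R) :
    ∀ ⦃x y : FreeAlgebra ℂ (Fin m)⦄, CpRel m R x y → phi R x = phi R y := by
  rintro x y ⟨i, j⟩
  rw [map_mul, phi, FreeAlgebra.lift_ι_apply, FreeAlgebra.lift_ι_apply]
  rw [map_sum]
  have h1 : ∀ k : Fin m, (FreeAlgebra.lift ℂ fun i => (aOp R i : Module.End ℂ (Fock m)))
      (∑ l, R k l i j • (FreeAlgebra.ι ℂ k * FreeAlgebra.ι ℂ l)) =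
      ∑ l, R k l i j • (aOp R k * aOp R l) := by
    intro k
    rw [map_sum]
    apply Finset.sum_congr rfl
    intro l _
    rw [map_smul, map_mul, FreeAlgebra.lift_ι_apply, FreeAlgebra.lift_ι_apply]
  rw [Finset.sum_congr rfl fun k _ => h1 k]
  rw [show (aOp R i * aOp R j : Module.End ℂ (Fock m))
    = ∑ p : Fin m × Fin m, R p.1 p.2 i j • (aOp R p.1 * aOp R p.2) from aOp_rel hinv hybe i j,
    Fintype.sum_prod_type]

noncomputable def Phi (hinv : IsInvolutiveR R) (hybe : SatisfiesYBE R) :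
    Cp m R →ₐ[ℂ] Module.End ℂ (Fock m) :=
  RingQuot.liftAlgHom ℂ ⟨phi R, phi_rel hinv hybe⟩

noncomputable def vac : Fock m := DirectSum.lof ℂ ℕ (fun k => V m k) 0 (fun _ => 1)

lemma Phi_psiP (hinv : IsInvolutiveR R) (hybe : SatisfiesYBE R) (i : Fin m) :
    Phi hinv hybe (psiP m R i) = aOp R i := by
  rw [psiP, Phi, RingQuot.liftAlgHom_mkAlgHom_apply, phi, FreeAlgebra.lift_ι_apply]

lemma single_eq_insL {k : ℕ} (i : Fin m) (J : Fin k → Fin m) :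
    insL i (Pi.single J (1 : ℂ)) = Pi.single (Fin.cons i J) (1 : ℂ) := by
  funext I
  rw [insL_apply]
  by_cases h : I = Fin.cons i J
  · subst h
    have h0 : (Fin.cons i J : Fin (k + 1) → Fin m) 0 = i :=
      @Fin.cons_zero k (fun _ : Fin (k + 1) => Fin m) i J
    have ht : Fin.tail (Fin.cons i J : Fin (k + 1) → Fin m) = J :=
      @Fin.tail_cons k (fun _ : Fin (k + 1) => Fin m) i J
    rw [if_pos h0, ht, Pi.single_eq_same, Pi.single_eq_same]
  · rw [Pi.single_eq_of_ne h]
    by_cases h1 : I 0 = i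
    · have h2 : Fin.tail I ≠ J := fun hc => h (by rw [← h1, ← hc, Fin.cons_self_tail])
      rw [if_pos h1, Pi.single_eq_of_ne h2]
    · rw [if_neg h1]

lemma Phi_prod_vac (hinv : IsInvolutiveR R) (hybe : SatisfiesYBE R) :
    ∀ (k : ℕ) (I : Fin k → Fin m),
      Phi hinv hybe (((List.finRange k).map fun t => psiP m R (I t)).prod) vac =
        DirectSum.lof ℂ ℕ (fun k => V m k) k (Fsym R k (Pi.single I 1)) := by
  intro k
  induction k with
  | zero =>
    intro I
    rw [List.finRange_zero, List.map_nil, List.prod_nil, map_one]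
    rw [show Fsym R 0 (Pi.single I 1) = Pi.single I 1 from rfl]
    rw [show (Pi.single I (1 : ℂ) : V m 0) = fun _ => 1 from by
      funext J; rw [Subsingleton.elim J I, Pi.single_eq_same]]
    rfl
  | succ k ih =>
    intro I
    rw [List.finRange_succ, List.map_cons, List.prod_cons, List.map_map, map_mul]
    have hrest : ((List.finRange k).map ((fun t => psiP m R (I t)) ∘ Fin.succ)).prod =
        ((List.finRange k).map fun t => psiP m R (Fin.tail I t)).prod := rfl
    rw [show ((Phi hinv hybe) (psiP m R (I 0)) * (Phi hinv hybe)
        (((List.finRange k).map ((fun t => psiP m R (I t)) ∘ Fin.succ)).prod)) vac =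
      (Phi hinv hybe) (psiP m R (I 0)) (((Phi hinv hybe)
        (((List.finRange k).map ((fun t => psiP m R (I t)) ∘ Fin.succ)).prod)) vac) from rfl]
    rw [hrest, ih (Fin.tail I), Phi_psiP hinv hybe, aOp_lof, Fins hinv hybe,
      single_eq_insL, Fin.cons_self_tail]

noncomputable def nuL (hinv : IsInvolutiveR R) (hybe : SatisfiesYBE R) :
    Cp m R →ₗ[ℂ] Fock m where
  toFun c := Phi hinv hybe c vac
  map_add' a b := by
    rw [show Phi hinv hybe (a + b) = Phi hinv hybe a + Phi hinv hybe b from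
      (Phi hinv hybe).toLinearMap.map_add a b]
    rfl
  map_smul' c a := by
    rw [show Phi hinv hybe (c • a) = c • Phi hinv hybe a from
      (Phi hinv hybe).toLinearMap.map_smul c a]
    rfl

lemma nu_comp_mu (hinv : IsInvolutiveR R) (hybe : SatisfiesYBE R) (n : ℕ) :
    nuL hinv hybe ∘ₗ muN m R n =
      (DirectSum.lof ℂ ℕ (fun k => V m k) n) ∘ₗ Fsym R n := by
  apply Module.Basis.ext (Pi.basisFun ℂ (Fin n → Fin m))
  intro I
  rw [LinearMap.comp_apply, LinearMap.comp_apply, muN, Module.Basis.constr_basis]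
  rw [show nuL hinv hybe (((List.finRange n).map fun t => psiP m R (I t)).prod)
    = Phi hinv hybe (((List.finRange n).map fun t => psiP m R (I t)).prod) vac from rfl]
  rw [Phi_prod_vac hinv hybe n I, Pi.basisFun_apply]

lemma ker_muN_le_ker_Fsym (hinv : IsInvolutiveR R) (hybe : SatisfiesYBE R) (n : ℕ) :
    LinearMap.ker (muN m R n) ≤ LinearMap.ker (Fsym R n) := by
  intro v hv
  rw [LinearMap.mem_ker] at hv ⊢
  have h2 := LinearMap.congr_fun (nu_comp_mu hinv hybe n) v
  rw [LinearMap.comp_apply, LinearMap.comp_apply, hv, map_zero] at h2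
  have h3 := congrArg (fun z : Fock m => z n) h2
  simpa [DirectSum.lof_apply] using h3.symm

/-- action of `L_j` on a basis vector. -/
lemma Lop_single {n j : ℕ} (hj : j + 1 < n) (I : Fin n → Fin m) :
    Lop R n j hj (Pi.single I 1) = ∑ p : Fin m × Fin m,
      R p.1 p.2 (I ⟨j, by omega⟩) (I ⟨j + 1, hj⟩) • (Pi.single (upd j I p.1 p.2) (1 : ℂ) : V m n) := by
  funext I'
  rw [Lop_apply, Finset.sum_apply]
  by_cases hag : ∀ t : Fin n, (t : ℕ) ≠ j → (t : ℕ) ≠ j + 1 → I' t = I t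
  · have hL : ∀ q : Fin m × Fin m,
        R (I' ⟨j, by omega⟩) (I' ⟨j + 1, hj⟩) q.1 q.2 * (Pi.single I 1 : V m n) (upd j I' q.1 q.2)
        = if q = (I ⟨j, by omega⟩, I ⟨j + 1, hj⟩) then
            R (I' ⟨j, by omega⟩) (I' ⟨j + 1, hj⟩) q.1 q.2 else 0 := by
      intro q
      by_cases hq : upd j I' q.1 q.2 = I
      · rw [Pi.single_apply, if_pos hq, mul_one, if_pos]
        apply Prod.ext
        · rw [← hq, upd_left hj]
        · rw [← hq, upd_right hj]
      · rw [Pi.single_apply, if_neg hq, mul_zero, if_neg]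
        intro hc
        apply hq
        funext t
        by_cases h1 : (t : ℕ) = j
        · have ht : t = ⟨j, by omega⟩ := Fin.ext h1
          rw [ht, upd_left hj, show q.1 = I ⟨j, by omega⟩ from congrArg Prod.fst hc]
        by_cases h2 : (t : ℕ) = j + 1
        · have ht : t = ⟨j + 1, hj⟩ := Fin.ext h2
          rw [ht, upd_right hj, show q.2 = I ⟨j + 1, hj⟩ from congrArg Prod.snd hc]
        · rw [upd_other _ _ _ _ h1 h2, hag t h1 h2]
    have hR : ∀ p : Fin m × Fin m,
        (R p.1 p.2 (I ⟨j, by omega⟩) (I ⟨j + 1, hj⟩) • (Pi.single (upd j I p.1 p.2) (1 : ℂ) : V m n)) I'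
        = if p = (I' ⟨j, by omega⟩, I' ⟨j + 1, hj⟩) then
            R p.1 p.2 (I ⟨j, by omega⟩) (I ⟨j + 1, hj⟩) else 0 := by
      intro p
      rw [Pi.smul_apply, Pi.single_apply, smul_eq_mul]
      by_cases hq : I' = upd j I p.1 p.2
      · rw [if_pos hq, mul_one, if_pos]
        apply Prod.ext
        · rw [hq, upd_left hj]
        · rw [hq, upd_right hj]
      · rw [if_neg hq, mul_zero, if_neg]
        intro hc
        apply hq
        funext t
        by_cases h1 : (t : ℕ) = j
        · have ht : t = ⟨j, by omega⟩ := Fin.ext h1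
          rw [ht, upd_left hj, show p.1 = I' ⟨j, by omega⟩ from congrArg Prod.fst hc]
        by_cases h2 : (t : ℕ) = j + 1
        · have ht : t = ⟨j + 1, hj⟩ := Fin.ext h2
          rw [ht, upd_right hj, show p.2 = I' ⟨j + 1, hj⟩ from congrArg Prod.snd hc]
        · rw [upd_other _ _ _ _ h1 h2, hag t h1 h2]
    rw [Finset.sum_congr rfl fun q _ => hL q, Finset.sum_congr rfl fun p _ => hR p,
      Finset.sum_ite_eq' Finset.univ _ (fun q : Fin m × Fin m =>
        R (I' ⟨j, by omega⟩) (I' ⟨j + 1, hj⟩) q.1 q.2),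
      Finset.sum_ite_eq' Finset.univ _ (fun p : Fin m × Fin m =>
        R p.1 p.2 (I ⟨j, by omega⟩) (I ⟨j + 1, hj⟩)),
      if_pos (Finset.mem_univ _), if_pos (Finset.mem_univ _)]
  · push_neg at hag
    obtain ⟨t, h1, h2, h3⟩ := hag
    have hL : ∀ q : Fin m × Fin m,
        R (I' ⟨j, by omega⟩) (I' ⟨j + 1, hj⟩) q.1 q.2 * (Pi.single I 1 : V m n) (upd j I' q.1 q.2)
          = 0 := by
      intro q
      rw [Pi.single_apply, if_neg, mul_zero]
      intro hc
      exact h3 (by rw [← hc, upd_other _ _ _ _ h1 h2])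
    have hR : ∀ p : Fin m × Fin m,
        (R p.1 p.2 (I ⟨j, by omega⟩) (I ⟨j + 1, hj⟩) • (Pi.single (upd j I p.1 p.2) (1 : ℂ) : V m n)) I'
          = 0 := by
      intro p
      rw [Pi.smul_apply, Pi.single_apply, if_neg, smul_zero]
      intro hc
      exact h3 (by rw [hc, upd_other _ _ _ _ h1 h2])
    rw [Finset.sum_congr rfl fun q _ => hL q, Finset.sum_congr rfl fun p _ => hR p,
      Finset.sum_const_zero]

lemma psi_rel_pair (c d : Fin m) :
    psiP m R c * psiP m R d = ∑ p : Fin m × Fin m,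
      R p.1 p.2 c d • (psiP m R p.1 * psiP m R p.2) := by
  have h := RingQuot.mkAlgHom_rel ℂ (CpRel.rel (m := m) (R := R) c d)
  rw [map_mul, map_sum] at h
  rw [show (psiP m R c * psiP m R d : Cp m R)
    = RingQuot.mkAlgHom ℂ (CpRel m R) (FreeAlgebra.ι ℂ c) *
      RingQuot.mkAlgHom ℂ (CpRel m R) (FreeAlgebra.ι ℂ d) from rfl, h]
  rw [Fintype.sum_prod_type]
  apply Finset.sum_congr rfl
  intro k _
  rw [map_sum]
  apply Finset.sum_congr rfl
  intro l _
  rw [map_smul, map_mul]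
  rfl

lemma psi_prod_rel {n j : ℕ} (hj : j + 1 < n) (I : Fin n → Fin m) :
    ∑ p : Fin m × Fin m, R p.1 p.2 (I ⟨j, by omega⟩) (I ⟨j + 1, hj⟩) •
      (((List.finRange n).map fun t => psiP m R (upd j I p.1 p.2 t)).prod)
    = ((List.finRange n).map fun t => psiP m R (I t)).prod := by
  have hlen : (List.finRange n).length = n := List.length_finRange
  have hmem1 : ∀ t ∈ (List.finRange n).take j, (t : ℕ) < j := by
    intro t ht
    obtain ⟨i, hi, hti⟩ := List.mem_iff_getElem.mp ht
    have h1 : i < j := by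
      have h0 := hi
      rw [List.length_take, hlen] at h0
      omega
    have h2 : (((List.finRange n).take j)[i]'hi) =
        ((List.finRange n)[i]'(by rw [hlen]; omega)) := List.getElem_take
    have h4 := congrArg Fin.val (h2.symm.trans hti)
    have h3 : (((List.finRange n)[i]'(by rw [hlen]; omega)) : ℕ) = i := by
      simp [List.getElem_finRange]
    omega
  have hmem2 : ∀ t ∈ (List.finRange n).drop (j + 1 + 1), j + 1 + 1 ≤ (t : ℕ) := by
    intro t ht
    obtain ⟨i, hi, hti⟩ := List.mem_iff_getElem.mp ht
    have h2 : (((List.finRange n).drop (j + 1 + 1))[i]'hi) =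
        ((List.finRange n)[j + 1 + 1 + i]'(by
          have h0 := hi
          rw [List.length_drop, hlen] at h0
          rw [hlen]; omega)) := List.getElem_drop
    have h4 := congrArg Fin.val (h2.symm.trans hti)
    have h3 : (((List.finRange n)[j + 1 + 1 + i]'(by
        have h0 := hi
        rw [List.length_drop, hlen] at h0
        rw [hlen]; omega)) : ℕ) = j + 1 + 1 + i := by
      simp [List.getElem_finRange]
    omega
  set l1 := (List.finRange n).take j with hl1
  set l2 := (List.finRange n).drop (j + 1 + 1) with hl2
  have e1 : (List.finRange n).drop j =
      (⟨j, by omega⟩ : Fin n) :: (List.finRange n).drop (j + 1) := by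
    rw [List.drop_eq_getElem_cons (by rw [hlen]; omega)]
    congr 1
    apply Fin.ext
    simp [List.getElem_finRange]
  have e2 : (List.finRange n).drop (j + 1) = (⟨j + 1, hj⟩ : Fin n) :: l2 := by
    rw [List.drop_eq_getElem_cons (by rw [hlen]; omega)]
    congr 1
    apply Fin.ext
    simp [List.getElem_finRange]
  have hd : List.finRange n = l1 ++ (⟨j, by omega⟩ : Fin n) :: (⟨j + 1, hj⟩ : Fin n) :: l2 := by
    conv_lhs => rw [← List.take_append_drop j (List.finRange n)]
    rw [e1, e2]
  have key : ∀ (K : Fin n → Fin m), (∀ t : Fin n, (t : ℕ) ≠ j → (t : ℕ) ≠ j + 1 → K t = I t) →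
      ((List.finRange n).map fun t => psiP m R (K t)).prod =
      ((l1.map fun t => psiP m R (I t)).prod) *
        (psiP m R (K ⟨j, by omega⟩) * (psiP m R (K ⟨j + 1, hj⟩) *
          ((l2.map fun t => psiP m R (I t)).prod))) := by
    intro K hK
    conv_lhs => rw [hd]
    rw [List.map_append, List.map_cons, List.map_cons, List.prod_append, List.prod_cons,
      List.prod_cons]
    congr 1
    · exact congrArg List.prod (List.map_congr_left fun a ha =>
        by rw [hK a (by have := hmem1 a ha; omega) (by have := hmem1 a ha; omega)])
    · congr 2
      exact congrArg List.prod (List.map_congr_left fun a ha =>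
        by rw [hK a (by have := hmem2 a ha; omega) (by have := hmem2 a ha; omega)])
  rw [Finset.sum_congr rfl (fun p _ => by
    rw [key (upd j I p.1 p.2) (fun t h1 h2 => upd_other _ _ _ _ h1 h2),
      upd_left hj, upd_right hj])]
  rw [key I (fun _ _ _ => rfl)]
  have hterm : ∀ p : Fin m × Fin m, R p.1 p.2 (I ⟨j, by omega⟩) (I ⟨j + 1, hj⟩) •
      ((l1.map fun t => psiP m R (I t)).prod * (psiP m R p.1 * (psiP m R p.2 *
        (l2.map fun t => psiP m R (I t)).prod)))
      = (l1.map fun t => psiP m R (I t)).prod *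
          ((R p.1 p.2 (I ⟨j, by omega⟩) (I ⟨j + 1, hj⟩) • (psiP m R p.1 * psiP m R p.2)) *
            (l2.map fun t => psiP m R (I t)).prod) := by
    intro p
    rw [smul_mul_assoc, mul_smul_comm, mul_assoc]
  rw [Finset.sum_congr rfl fun p _ => hterm p, ← Finset.mul_sum, ← Finset.sum_mul,
    ← psi_rel_pair, mul_assoc]

lemma muN_Lop {n j : ℕ} (hj : j + 1 < n) :
    muN m R n ∘ₗ Lop R n j hj = muN m R n := by
  apply Module.Basis.ext (Pi.basisFun ℂ (Fin n → Fin m))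
  intro I
  rw [LinearMap.comp_apply, Pi.basisFun_apply, Lop_single hj I, map_sum]
  have hsingle : ∀ K : Fin n → Fin m,
      muN m R n (Pi.single K 1) = ((List.finRange n).map fun t => psiP m R (K t)).prod := by
    intro K
    rw [← Pi.basisFun_apply, muN, Module.Basis.constr_basis]
  rw [Finset.sum_congr rfl (fun p _ => by rw [map_smul, hsingle]), hsingle I]
  exact psi_prod_rel hj I

lemma Kspan_le_ker_muN (n : ℕ) : Kspan R n ≤ LinearMap.ker (muN m R n) := by
  apply iSup_le; intro j; apply iSup_le; intro hj
  rintro _ ⟨v, rfl⟩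
  rw [LinearMap.mem_ker, LinearMap.sub_apply, LinearMap.id_apply, map_sub,
    show muN m R n (Lop R n j hj v) = (muN m R n ∘ₗ Lop R n j hj) v from rfl,
    muN_Lop hj, sub_self]

end Stmt15

/-- If `R` is involutive and satisfies the Yang–Baxter equation and
`n ≥ 1`, then the image of `μ_n` (the `n`-particle sector of the Fock space) is linearly
isomorphic to the common eigenspace `{Ψ | R_{j,j+1} Ψ = Ψ for all j}`; in particular the
rank of `μ_n` equals the dimension of this common eigenspace (positions 0-indexed). -/
theorem range_muN_iso_common_eigenspace (m : ℕ) (R : Fin m → Fin m → Fin m → Fin m → ℂ)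
    (hinv : IsInvolutiveR R) (hybe : SatisfiesYBE R) (n : ℕ) (hn : 1 ≤ n) :
    Nonempty (↥(LinearMap.range (muN m R n)) ≃ₗ[ℂ]
        ↥(⨅ (j : ℕ) (hj : j + 1 < n),
          LinearMap.ker (Matrix.toLin' (Rjj R n j hj) - LinearMap.id))) ∧
      Module.finrank ℂ ↥(LinearMap.range (muN m R n)) =
        Module.finrank ℂ ↥(⨅ (j : ℕ) (hj : j + 1 < n),
          LinearMap.ker (Matrix.toLin' (Rjj R n j hj) - LinearMap.id)) := by
  classical
  have hker : LinearMap.ker (muN m R n) = Stmt15.Kspan R n := by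
    apply le_antisymm
    · exact le_trans (Stmt15.ker_muN_le_ker_Fsym hinv hybe n)
        (le_of_eq (Stmt15.ker_Fsym_eq_Kspan hinv hybe n))
    · exact Stmt15.Kspan_le_ker_muN n
  have hcompl := Stmt15.isCompl_Kspan_Fix hinv hybe n
  let e : ↥(LinearMap.range (muN m R n)) ≃ₗ[ℂ] ↥(Stmt15.Fix R n) :=
    ((LinearMap.quotKerEquivRange (muN m R n)).symm.trans
      (Submodule.quotEquivOfEq _ _ hker)).trans
      (Submodule.quotientEquivOfIsCompl _ _ hcompl)
  have hFix : Stmt15.Fix R n = ⨅ (j : ℕ) (hj : j + 1 < n),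
      LinearMap.ker (Matrix.toLin' (Rjj R n j hj) - LinearMap.id) := rfl
  rw [← hFix]
  exact ⟨⟨e⟩, e.finrank_eq⟩
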